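/- (Hou–Zeng q-analogue of Sun's identity) Let m, n, a be natural numbers with a ≤ m and a ≤ n, and let q and x be complex numbers with q not a root of unity and q ≠ 0 (or work in the field of rational functions ℚ(q,x)). Then the sum over k from 0 to m of (−1)^{m−k}·qbinom(m,k)·qbinom(n+k,a)·(−x q^a; q)_{n+k−a}·q^{C(k+1,2)−mk+C(a,2)} equals the sum over k from 0 to n of qbinom(n,k)·qbinom(m+k,a)·x^{m+k−a}·q^{mn+C(k,2)}, where qbinom denotes the Gaussian binomial coefficient, (b;q)_r = (1−b)(1−bq)⋯(1−bq^{r−1}) is the q-Pochhammer symbol, and C(p,2) = p(p−1)/2. -/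

import Mathlib

/-- The q-Pochhammer symbol `(b; q)_r = (1-b)(1-bq)⋯(1-bq^{r-1})`. -/
noncomputable def qPoch (q b : ℂ) (r : ℕ) : ℂ := ∏ i ∈ Finset.range r, (1 - b * q ^ i)

/-- The Gaussian binomial coefficient `qbinom(p, r) = (q^{p-r+1}; q)_r / (q; q)_r`,
equal to `0` when `r > p`. -/
noncomputable def qBinom (q : ℂ) (p r : ℕ) : ℂ :=
  if r ≤ p then qPoch q (q ^ (p - r + 1)) r / qPoch q q r else 0

lemma qPoch_succ (q b : ℂ) (s : ℕ) : qPoch q b (s+1) = qPoch q b s * (1 - b * q ^ s) := by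
  unfold qPoch; rw [Finset.prod_range_succ]

lemma qPoch_q_ne {q : ℂ} (hq : ∀ k : ℕ, 0 < k → q ^ k ≠ 1) (r : ℕ) : qPoch q q r ≠ 0 := by
  unfold qPoch
  refine Finset.prod_ne_zero_iff.2 fun i _ => ?_
  have h1 := hq (i+1) (Nat.succ_pos i)
  intro h
  exact h1 (by rw [pow_succ, mul_comm]; linear_combination -h)

lemma qBinom_eq {q : ℂ} (hq : ∀ k : ℕ, 0 < k → q ^ k ≠ 1) (p r : ℕ) (h : r ≤ p) :
    qBinom q p r = qPoch q q p / (qPoch q q r * qPoch q q (p - r)) := by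
  obtain ⟨d, rfl⟩ : ∃ d, p = d + r := ⟨p - r, by omega⟩
  unfold qBinom
  rw [if_pos h]
  have e1 : d + r - r = d := by omega
  rw [e1]
  have key : qPoch q q (d + r) = qPoch q q d * qPoch q (q ^ (d + 1)) r := by
    unfold qPoch
    rw [Finset.prod_range_add]
    congr 1
    refine Finset.prod_congr rfl fun i _ => ?_
    rw [pow_add, pow_add]
    ring
  rw [key]
  have hd := qPoch_q_ne hq d
  have hr := qPoch_q_ne hq r
  field_simp

lemma qBinom_zero (q : ℂ) (p : ℕ) : qBinom q p 0 = 1 := by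
  unfold qBinom qPoch; simp

lemma qBinom_eq_zero (q : ℂ) {p r : ℕ} (h : p < r) : qBinom q p r = 0 := by
  unfold qBinom; rw [if_neg (by omega)]

lemma qBinom_pascal1 {q : ℂ} (hq : ∀ k : ℕ, 0 < k → q ^ k ≠ 1) (p r : ℕ) :
    qBinom q (p+1) (r+1) = q^(r+1) * qBinom q p (r+1) + qBinom q p r := by
  rcases lt_or_ge p r with h | h
  · rw [qBinom_eq_zero q (by omega), qBinom_eq_zero q (by omega), qBinom_eq_zero q h]; ring
  rcases eq_or_lt_of_le h with rfl | h
  · rw [qBinom_eq hq (r+1) (r+1) le_rfl, qBinom_eq_zero q (by omega),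
      qBinom_eq hq r r le_rfl]
    simp only [Nat.sub_self]
    have h1 := qPoch_q_ne hq (r+1)
    have h2 := qPoch_q_ne hq r
    have h0 : qPoch q q 0 = 1 := by unfold qPoch; simp
    rw [h0]
    field_simp
    ring
  · obtain ⟨d, rfl⟩ : ∃ d, p = r + 1 + d := ⟨p - r - 1, by omega⟩
    rw [qBinom_eq hq _ _ (by omega), qBinom_eq hq _ _ (by omega), qBinom_eq hq _ _ (by omega)]
    have e1 : r + 1 + d + 1 - (r + 1) = d + 1 := by omega
    have e2 : r + 1 + d - (r + 1) = d := by omega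
    have e3 : r + 1 + d - r = d + 1 := by omega
    rw [e1, e2, e3]
    have hr := qPoch_q_ne hq r
    have hd := qPoch_q_ne hq d
    have hr1 := qPoch_q_ne hq (r+1)
    have hd1 := qPoch_q_ne hq (d+1)
    have hp := qPoch_q_ne hq (r+1+d)
    have E1 : r + 1 + d + 1 = (r + 1 + d) + 1 := rfl
    field_simp
    rw [E1, qPoch_succ, qPoch_succ q q r, qPoch_succ q q d]
    ring
lemma qBinom_pascal2 {q : ℂ} (hq : ∀ k : ℕ, 0 < k → q ^ k ≠ 1) (p r : ℕ) :
    qBinom q (p+1) (r+1) = qBinom q p (r+1) + q^(p-r) * qBinom q p r := by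
  rcases lt_or_ge p r with h | h
  · rw [qBinom_eq_zero q (by omega), qBinom_eq_zero q (by omega), qBinom_eq_zero q h]; ring
  rcases eq_or_lt_of_le h with rfl | h
  · rw [qBinom_eq hq (r+1) (r+1) le_rfl, qBinom_eq_zero q (by omega),
      qBinom_eq hq r r le_rfl]
    simp only [Nat.sub_self]
    have h1 := qPoch_q_ne hq (r+1)
    have h2 := qPoch_q_ne hq r
    have h0 : qPoch q q 0 = 1 := by unfold qPoch; simp
    rw [h0]
    field_simp
    ring
  · obtain ⟨d, rfl⟩ : ∃ d, p = r + 1 + d := ⟨p - r - 1, by omega⟩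
    rw [qBinom_eq hq _ _ (by omega), qBinom_eq hq _ _ (by omega), qBinom_eq hq _ _ (by omega)]
    have e1 : r + 1 + d + 1 - (r + 1) = d + 1 := by omega
    have e2 : r + 1 + d - (r + 1) = d := by omega
    have e3 : r + 1 + d - r = d + 1 := by omega
    rw [e1, e2, e3]
    have hr := qPoch_q_ne hq r
    have hd := qPoch_q_ne hq d
    have hr1 := qPoch_q_ne hq (r+1)
    have hd1 := qPoch_q_ne hq (d+1)
    have hp := qPoch_q_ne hq (r+1+d)
    have E1 : r + 1 + d + 1 = (r + 1 + d) + 1 := rfl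
    field_simp
    rw [E1, qPoch_succ, qPoch_succ q q r, qPoch_succ q q d]
    ring

lemma choose2_succ (j : ℕ) : (j+1).choose 2 = j.choose 2 + j := by
  rw [Nat.choose_succ_succ]
  simp [Nat.choose_one_right, Nat.add_comm]

/-- Gauss's q-binomial theorem. -/
lemma qPoch_sum {q : ℂ} (hq : ∀ k : ℕ, 0 < k → q ^ k ≠ 1) (b : ℂ) (N : ℕ) :
    qPoch q b N = ∑ j ∈ Finset.range (N+1),
      qBinom q N j * q ^ (j.choose 2) * (-b) ^ j := by
  induction N with
  | zero => simp [qPoch, qBinom]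
  | succ N ih =>
    rw [Finset.sum_range_succ' _ (N+1)]
    have step : ∀ j ∈ Finset.range (N+1),
        qBinom q (N+1) (j+1) * q ^ ((j+1).choose 2) * (-b) ^ (j+1)
        = qBinom q N (j+1) * q ^ ((j+1).choose 2) * (-b) ^ (j+1)
          + (-b * q^N) * (qBinom q N j * q ^ (j.choose 2) * (-b) ^ j) := by
      intro j hj
      rw [qBinom_pascal2 hq N j, choose2_succ]
      have hjN : j ≤ N := by simpa using Nat.lt_succ_iff.mp (Finset.mem_range.mp hj)
      have : q ^ (N - j) * q ^ (j.choose 2 + j) = q ^ N * q ^ (j.choose 2) := by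
        rw [← pow_add, ← pow_add]; congr 1; omega
      calc (qBinom q N (j+1) + q^(N-j) * qBinom q N j) * q ^ (j.choose 2 + j) * (-b) ^ (j+1)
          = qBinom q N (j+1) * q ^ (j.choose 2 + j) * (-b) ^ (j+1)
            + qBinom q N j * (q ^ (N-j) * q ^ (j.choose 2 + j)) * (-b) ^ (j+1) := by ring
        _ = _ := by rw [this]; ring
    rw [Finset.sum_congr rfl step, Finset.sum_add_distrib, ← Finset.mul_sum]
    have top : qBinom q N (N+1) * q ^ ((N+1).choose 2) * (-b) ^ (N+1) = 0 := by
      rw [qBinom_eq_zero q (by omega)]; ring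
    have shift : ∑ j ∈ Finset.range (N+1), qBinom q N (j+1) * q ^ ((j+1).choose 2) * (-b) ^ (j+1)
        + qBinom q (N+1) 0 * q ^ (Nat.choose 0 2) * (-b) ^ 0
        = ∑ j ∈ Finset.range (N+1), qBinom q N j * q ^ (j.choose 2) * (-b) ^ j := by
      rw [Finset.sum_range_succ _ N, top, add_zero,
        Finset.sum_range_succ' (fun j => qBinom q N j * q ^ (j.choose 2) * (-b) ^ j) N]
      simp [qBinom_zero]
    rw [qPoch_succ, ih]
    linear_combination -shift

/-- trinomial revision -/
lemma qBinom_trinomial {q : ℂ} (hq : ∀ k : ℕ, 0 < k → q ^ k ≠ 1) (N a j : ℕ) (ha : a ≤ N) :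
    qBinom q N a * qBinom q (N-a) j = qBinom q (a+j) a * qBinom q N (a+j) := by
  rcases le_or_gt (a+j) N with h | h
  · rw [qBinom_eq hq N a ha, qBinom_eq hq (N-a) j (by omega), qBinom_eq hq (a+j) a (by omega),
      qBinom_eq hq N (a+j) h]
    have e1 : N - a - j = N - (a+j) := by omega
    have e2 : a + j - a = j := by omega
    rw [e1, e2]
    have h1 := qPoch_q_ne hq a
    have h2 := qPoch_q_ne hq j
    have h3 := qPoch_q_ne hq (N-a)
    have h4 := qPoch_q_ne hq (N-(a+j))
    have h5 := qPoch_q_ne hq (a+j)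
    field_simp
  · rw [qBinom_eq_zero q (show N - a < j by omega), qBinom_eq_zero q h]; ring
lemma key_sum {q : ℂ} (hq0 : q ≠ 0) (hq : ∀ k : ℕ, 0 < k → q ^ k ≠ 1) (s : ℕ) :
    ∀ m n : ℕ,
    (∑ k ∈ Finset.range (m+1), (-1:ℂ)^(m-k) * qBinom q m k *
        q ^ (((k+1).choose 2 : ℤ) - (m:ℤ)*(k:ℕ)) * qBinom q (n+k) s)
    = if m ≤ s then q ^ ((m:ℤ)*((n:ℤ)-(s:ℤ)) + (((m+1).choose 2 : ℕ) : ℤ)) * qBinom q n (s-m)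
      else 0 := by
  intro m
  induction m with
  | zero => intro n; simp [qBinom_zero]
  | succ m ih =>
    intro n
    have recur : (∑ k ∈ Finset.range (m+1+1), (-1:ℂ)^(m+1-k) * qBinom q (m+1) k *
        q ^ (((k+1).choose 2 : ℤ) - ((m+1:ℕ):ℤ)*(k:ℕ)) * qBinom q (n+k) s)
        = q ^ (-(m:ℤ)) * (∑ k ∈ Finset.range (m+1), (-1:ℂ)^(m-k) * qBinom q m k *
            q ^ (((k+1).choose 2 : ℤ) - (m:ℤ)*(k:ℕ)) * qBinom q ((n+1)+k) s)
          - (∑ k ∈ Finset.range (m+1), (-1:ℂ)^(m-k) * qBinom q m k *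
            q ^ (((k+1).choose 2 : ℤ) - (m:ℤ)*(k:ℕ)) * qBinom q (n+k) s) := by
      rw [Finset.sum_range_succ']
      have hterm : ∀ k ∈ Finset.range (m+1),
          (-1:ℂ)^(m+1-(k+1)) * qBinom q (m+1) (k+1) *
            q ^ (((k+1+1).choose 2 : ℤ) - ((m+1:ℕ):ℤ)*((k+1:ℕ):ℤ)) * qBinom q (n+(k+1)) s
          = (-1:ℂ)^(m+1-(k+1)) * qBinom q m (k+1) *
              q ^ (((k+1+1).choose 2 : ℤ) - (m:ℤ)*((k+1:ℕ):ℤ)) * qBinom q (n+(k+1)) s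
            + q ^ (-(m:ℤ)) * ((-1:ℂ)^(m-k) * qBinom q m k *
              q ^ (((k+1).choose 2 : ℤ) - (m:ℤ)*(k:ℕ)) * qBinom q ((n+1)+k) s) := by
        intro k hk
        rw [qBinom_pascal1 hq m k]
        have e1 : m + 1 - (k+1) = m - k := by omega
        have e4 : n + (k+1) = (n+1)+k := by omega
        have e2 : q^(k+1) * q ^ (((k+1+1).choose 2 : ℤ) - ((m+1:ℕ):ℤ)*((k+1:ℕ):ℤ))
            = q ^ (((k+1+1).choose 2 : ℤ) - (m:ℤ)*((k+1:ℕ):ℤ)) := by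
          rw [← zpow_natCast q (k+1), ← zpow_add₀ hq0]
          congr 1; push_cast; ring
        have e3 : q ^ (((k+1+1).choose 2 : ℤ) - ((m+1:ℕ):ℤ)*((k+1:ℕ):ℤ))
            = q ^ (-(m:ℤ)) * q ^ (((k+1).choose 2 : ℤ) - (m:ℤ)*(k:ℕ)) := by
          rw [← zpow_add₀ hq0]
          congr 1
          have h5 := choose2_succ (k+1)
          push_cast [h5]; ring
        rw [e1, e4]
        linear_combination ((-1:ℂ)^(m-k) * qBinom q m (k+1) * qBinom q ((n+1)+k) s) * e2
          + ((-1:ℂ)^(m-k) * qBinom q m k * qBinom q ((n+1)+k) s) * e3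
      rw [Finset.sum_congr rfl hterm, Finset.sum_add_distrib, ← Finset.mul_sum]
      have claim : (∑ k ∈ Finset.range (m+1), (-1:ℂ)^(m+1-(k+1)) * qBinom q m (k+1) *
            q ^ (((k+1+1).choose 2 : ℤ) - (m:ℤ)*((k+1:ℕ):ℤ)) * qBinom q (n+(k+1)) s)
          + (-1:ℂ)^(m+1-0) * qBinom q (m+1) 0 *
            q ^ (((0+1).choose 2 : ℤ) - ((m+1:ℕ):ℤ)*((0:ℕ):ℤ)) * qBinom q (n+0) s
          = - ∑ k ∈ Finset.range (m+1), (-1:ℂ)^(m-k) * qBinom q m k *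
              q ^ (((k+1).choose 2 : ℤ) - (m:ℤ)*(k:ℕ)) * qBinom q (n+k) s := by
        have h0 : (-1:ℂ)^(m+1-0) * qBinom q (m+1) 0 *
            q ^ (((0+1).choose 2 : ℤ) - ((m+1:ℕ):ℤ)*((0:ℕ):ℤ)) * qBinom q (n+0) s
            = (-1:ℂ)^(m+1-0) * qBinom q m 0 *
            q ^ (((0+1).choose 2 : ℤ) - (m:ℤ)*((0:ℕ):ℤ)) * qBinom q (n+0) s := by
          simp [qBinom_zero]
        rw [h0, ← Finset.sum_range_succ' (fun k => (-1:ℂ)^(m+1-k) * qBinom q m k *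
            q ^ (((k+1).choose 2 : ℤ) - (m:ℤ)*(k:ℕ)) * qBinom q (n+k) s) (m+1)]
        rw [Finset.sum_range_succ _ (m+1), qBinom_eq_zero q (show m < m+1 by omega)]
        rw [← Finset.sum_neg_distrib]
        simp only [mul_zero, zero_mul, add_zero]
        refine Finset.sum_congr rfl fun k hk => ?_
        have hkm := Finset.mem_range.mp hk
        have e5 : m + 1 - k = (m - k) + 1 := by omega
        rw [e5, pow_succ]
        ring
      linear_combination claim
    rw [recur, ih (n+1), ih n]
    by_cases h1 : m + 1 ≤ s
    · rw [if_pos (by omega : m ≤ s), if_pos (by omega : m ≤ s), if_pos h1]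
      obtain ⟨u, rfl⟩ : ∃ u, s = m + 1 + u := ⟨s - m - 1, by omega⟩
      rw [show m + 1 + u - m = u + 1 from by omega, show m + 1 + u - (m+1) = u from by omega,
        qBinom_pascal2 hq n u]
      by_cases hun : u ≤ n
      · have hAB : q ^ (-(m:ℤ)) * q ^ ((m:ℤ)*(((n+1:ℕ):ℤ)-((m+1+u:ℕ):ℤ)) + (((m+1).choose 2 : ℕ) : ℤ))
            = q ^ ((m:ℤ)*((n:ℤ)-((m+1+u:ℕ):ℤ)) + (((m+1).choose 2 : ℕ) : ℤ)) := by
          rw [← zpow_add₀ hq0]; congr 1; push_cast; ring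
        have hG : q ^ ((m:ℤ)*((n:ℤ)-((m+1+u:ℕ):ℤ)) + (((m+1).choose 2 : ℕ) : ℤ)) * q ^ ((n-u : ℕ))
            = q ^ (((m+1:ℕ):ℤ)*((n:ℤ)-((m+1+u:ℕ):ℤ)) + (((m+1+1).choose 2 : ℕ) : ℤ)) := by
          rw [← zpow_natCast q (n-u), ← zpow_add₀ hq0]
          congr 1
          have h5 := choose2_succ (m+1)
          have h6 : ((n - u : ℕ) : ℤ) = (n:ℤ) - (u:ℤ) := by
            rw [Nat.cast_sub hun]
          push_cast [h5, h6]; ring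
        linear_combination (qBinom q n (u+1) + q^(n-u) * qBinom q n u) * hAB
          + qBinom q n u * hG
      · rw [qBinom_eq_zero q (show n < u+1 by omega), qBinom_eq_zero q (show n < u by omega)]
        simp
    · by_cases h2 : m ≤ s
      · rw [if_pos h2, if_pos h2, if_neg h1]
        rw [show s - m = 0 from by omega]
        simp only [qBinom_zero, mul_one]
        rw [← zpow_add₀ hq0,
          show -(m:ℤ) + ((m:ℤ)*(((n+1:ℕ):ℤ)-(s:ℤ)) + (((m+1).choose 2 : ℕ) : ℤ))
            = (m:ℤ)*((n:ℤ)-(s:ℤ)) + (((m+1).choose 2 : ℕ) : ℤ) from by push_cast; ring,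
          sub_self]
      · rw [if_neg h2, if_neg h2, if_neg h1]
        simp
lemma choose2_cast (p : ℕ) : 2 * ((p.choose 2 : ℕ) : ℤ) = (p:ℤ) * ((p:ℤ) - 1) := by
  induction p with
  | zero => simp
  | succ p ih =>
    rw [choose2_succ p]
    push_cast
    push_cast at ih
    linear_combination ih

/-- The Hou–Zeng q-analogue of Sun's identity. -/
theorem hou_zeng_q_sun (m n a : ℕ) (ham : a ≤ m) (han : a ≤ n) (q x : ℂ)
    (hq0 : q ≠ 0) (hq : ∀ k : ℕ, 0 < k → q ^ k ≠ 1) :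
    ∑ k ∈ Finset.range (m + 1),
        (-1 : ℂ) ^ (m - k) * qBinom q m k * qBinom q (n + k) a *
          qPoch q (-x * q ^ a) (n + k - a) *
          q ^ (((k + 1).choose 2 : ℤ) - (m : ℤ) * k + (a.choose 2 : ℤ)) =
      ∑ k ∈ Finset.range (n + 1),
        qBinom q n k * qBinom q (m + k) a * x ^ (m + k - a) *
          q ^ (m * n + k.choose 2) := by
  classical
  have stepA : ∀ k ∈ Finset.range (m+1),
      (-1 : ℂ) ^ (m - k) * qBinom q m k * qBinom q (n + k) a *
          qPoch q (-x * q ^ a) (n + k - a) *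
          q ^ (((k + 1).choose 2 : ℤ) - (m : ℤ) * k + (a.choose 2 : ℤ))
      = ∑ j ∈ Finset.range (n+m-a+1),
          (-1 : ℂ) ^ (m - k) * qBinom q m k *
            (qBinom q (a+j) a * qBinom q (n+k) (a+j) * q^(j.choose 2) * (x*q^a)^j) *
            q ^ (((k + 1).choose 2 : ℤ) - (m : ℤ) * k + (a.choose 2 : ℤ)) := by
    intro k hk
    have hkm := Finset.mem_range.mp hk
    rw [qPoch_sum hq (-x * q ^ a) (n+k-a), Finset.mul_sum, Finset.sum_mul]
    have inner : ∀ j ∈ Finset.range (n+k-a+1),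
        (-1 : ℂ) ^ (m - k) * qBinom q m k * qBinom q (n + k) a *
          (qBinom q (n+k-a) j * q ^ (j.choose 2) * (-(-x * q ^ a)) ^ j) *
          q ^ (((k + 1).choose 2 : ℤ) - (m : ℤ) * k + (a.choose 2 : ℤ))
        = (-1 : ℂ) ^ (m - k) * qBinom q m k *
            (qBinom q (a+j) a * qBinom q (n+k) (a+j) * q^(j.choose 2) * (x*q^a)^j) *
            q ^ (((k + 1).choose 2 : ℤ) - (m : ℤ) * k + (a.choose 2 : ℤ)) := by
      intro j hj
      have htri := qBinom_trinomial hq (n+k) a j (by omega)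
      have hneg : (-(-x * q ^ a)) = x * q ^ a := by ring
      rw [hneg]
      linear_combination ((-1 : ℂ) ^ (m - k) * q ^ (j.choose 2) * (x*q^a)^j *
        q ^ (((k + 1).choose 2 : ℤ) - (m : ℤ) * k + (a.choose 2 : ℤ)) * qBinom q m k) * htri
    rw [Finset.sum_congr rfl inner]
    refine Finset.sum_subset (Finset.range_subset_range.2 (by omega)) ?_
    intro j hj hj2
    have h1 : n + k < a + j := by
      have h2 := Finset.mem_range.mp hj
      have h3 : ¬ (j < n + k - a + 1) := fun h => hj2 (Finset.mem_range.mpr h)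
      omega
    rw [qBinom_eq_zero q h1]
    ring
  rw [Finset.sum_congr rfl stepA, Finset.sum_comm]
  have stepB : ∀ j ∈ Finset.range (n+m-a+1),
      (∑ k ∈ Finset.range (m+1),
        (-1 : ℂ) ^ (m - k) * qBinom q m k *
            (qBinom q (a+j) a * qBinom q (n+k) (a+j) * q^(j.choose 2) * (x*q^a)^j) *
            q ^ (((k + 1).choose 2 : ℤ) - (m : ℤ) * k + (a.choose 2 : ℤ)))
      = (qBinom q (a+j) a * q^(j.choose 2) * (x*q^a)^j * q^((a.choose 2 : ℕ) : ℤ)) *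
          (if m ≤ a+j then q ^ ((m:ℤ)*((n:ℤ)-((a+j:ℕ):ℤ)) + (((m+1).choose 2 : ℕ) : ℤ)) *
              qBinom q n (a+j-m) else 0) := by
    intro j hj
    have inner2 : ∀ k ∈ Finset.range (m+1),
        (-1 : ℂ) ^ (m - k) * qBinom q m k *
            (qBinom q (a+j) a * qBinom q (n+k) (a+j) * q^(j.choose 2) * (x*q^a)^j) *
            q ^ (((k + 1).choose 2 : ℤ) - (m : ℤ) * k + (a.choose 2 : ℤ))
        = (qBinom q (a+j) a * q^(j.choose 2) * (x*q^a)^j * q^((a.choose 2 : ℕ) : ℤ)) *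
            ((-1 : ℂ) ^ (m - k) * qBinom q m k *
              q ^ (((k+1).choose 2 : ℤ) - (m:ℤ)*(k:ℕ)) * qBinom q (n+k) (a+j)) := by
      intro k hk
      rw [zpow_add₀ hq0]
      ring
    rw [Finset.sum_congr rfl inner2, ← Finset.mul_sum, key_sum hq0 hq (a+j) m n]
  rw [Finset.sum_congr rfl stepB]
  -- now reindex
  obtain ⟨t, rfl⟩ : ∃ t, m = a + t := ⟨m - a, by omega⟩
  rw [show n+(a+t)-a+1 = n+t+1 from by omega]
  have hsub : Finset.Ico t (n+t+1) ⊆ Finset.range (n+t+1) := by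
    rw [Finset.range_eq_Ico]
    exact Finset.Ico_subset_Ico (by omega) le_rfl
  have zero1 : ∀ j ∈ Finset.range (n+t+1), j ∉ Finset.Ico t (n+t+1) →
      (qBinom q (a+j) a * q^(j.choose 2) * (x*q^a)^j * q^((a.choose 2 : ℕ) : ℤ)) *
          (if a+t ≤ a+j then q ^ (((a+t:ℕ):ℤ)*((n:ℤ)-((a+j:ℕ):ℤ)) + ((((a+t)+1).choose 2 : ℕ) : ℤ)) *
              qBinom q n (a+j-(a+t)) else 0) = 0 := by
    intro j hj hj2
    have h1 := Finset.mem_range.mp hj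
    have h2 : ¬ (t ≤ j) := fun h => hj2 (Finset.mem_Ico.mpr ⟨h, by omega⟩)
    rw [if_neg (by omega)]
    ring
  rw [← Finset.sum_subset hsub zero1, Finset.sum_Ico_eq_sum_range,
    show n+t+1-t = n+1 from by omega]
  refine Finset.sum_congr rfl fun i hi => ?_
  rw [if_pos (by omega), show a+(t+i)-(a+t) = i from by omega,
    show a+(t+i) = a+t+i from by omega, show a+t+i-a = t+i from by omega,
    mul_pow x (q^a) (t+i), ← pow_mul]
  have hexp : q^((t+i).choose 2) * q^(a*(t+i)) * q^((a.choose 2 : ℕ) : ℤ) *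
      q ^ (((a+t:ℕ):ℤ)*((n:ℤ)-((a+t+i:ℕ):ℤ)) + ((((a+t)+1).choose 2 : ℕ) : ℤ))
      = q ^ ((a+t)*n + i.choose 2) := by
    rw [← zpow_natCast q ((t+i).choose 2), ← zpow_natCast q (a*(t+i)),
      ← zpow_natCast q ((a+t)*n + i.choose 2), ← zpow_add₀ hq0, ← zpow_add₀ hq0,
      ← zpow_add₀ hq0]
    congr 1
    refine mul_left_cancel₀ (show (2:ℤ) ≠ 0 from by norm_num) ?_
    have h1 := choose2_cast (t+i)
    have h2 := choose2_cast a
    have h3 := choose2_cast (a+t+1)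
    have h4 := choose2_cast i
    push_cast at h1 h2 h3 h4 ⊢
    linear_combination h1 + h2 + h3 - h4
  linear_combination (qBinom q (a+t+i) a * qBinom q n i * x^(t+i)) * hexp
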